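/- arXiv:2605.24181 — 3 statements merged into one kernel-verified Lean document; each statement's English description precedes it below -/
import Mathlib

section
/- Let C be a neural code on n neurons with canonical form CF(C) = {g_1, …, g_k}, and let J = (P(g_1), …, P(g_k)) ⊆ S be its polarized neural ideal. Then {P(g_1), …, P(g_k)} is a minimal generating set for J; in particular, no P(g_i) is divisible by any P(g_j) for j ≠ i, and no proper subset of {P(g_1), …, P(g_k)} generates J. -/
open MvPolynomial Finset

noncomputable section NeuralCore

/-- The field with two elements. -/
abbrev F2 : Type := ZMod 2

/-- The variables of the polarized ring `S = F2[x_1,…,x_n,y_1,…,y_n]`: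
`Sum.inl i` is `x_i` and `Sum.inr i` is `y_i`. -/
abbrev SV (n : ℕ) : Type := Fin n ⊕ Fin n

/-- The polarized polynomial ring `S = F2[x_1,…,x_n,y_1,…,y_n]`. -/
abbrev PolyS (n : ℕ) : Type := MvPolynomial (SV n) F2

/-- The polynomial ring `R = F2[x_1,…,x_n]`. -/
abbrev PolyR (n : ℕ) : Type := MvPolynomial (Fin n) F2

/-- The pseudo-monomial `∏_{i ∈ σ} x_i ∏_{j ∈ τ} (1 - x_j)`. -/
def pseudoMonomial {n : ℕ} (σ τ : Finset (Fin n)) : PolyR n :=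
  (∏ i ∈ σ, X i) * ∏ j ∈ τ, (1 - X j)

/-- A polynomial of `R` is a pseudo-monomial if it has the form
`∏_{i ∈ σ} x_i ∏_{j ∈ τ} (1 - x_j)` with `σ ∩ τ = ∅`. -/
def IsPseudoMonomial {n : ℕ} (f : PolyR n) : Prop :=
  ∃ σ τ : Finset (Fin n), Disjoint σ τ ∧ f = pseudoMonomial σ τ

/-- `ρ_v = ∏_{i ∈ v} x_i ∏_{j ∉ v} (1 - x_j)`. -/
def rhoPoly {n : ℕ} (v : Finset (Fin n)) : PolyR n := pseudoMonomial v vᶜ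

/-- The neural ideal `L = (ρ_v : v ∉ C)` of a neural code `C ⊆ 2^[n]`. -/
def neuralIdeal {n : ℕ} (C : Finset (Finset (Fin n))) : Ideal (PolyR n) :=
  Ideal.span {f | ∃ v : Finset (Fin n), v ∉ C ∧ f = rhoPoly v}

/-- The canonical form `CF(C)`: the pseudo-monomials of the neural ideal divisible by
no other pseudo-monomial of the neural ideal. -/
def canonicalForm {n : ℕ} (C : Finset (Finset (Fin n))) : Set (PolyR n) :=
  {f | IsPseudoMonomial f ∧ f ∈ neuralIdeal C ∧
    ∀ g : PolyR n, IsPseudoMonomial g → g ∈ neuralIdeal C → g ∣ f → g = f}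

/-- The polarization `∏_{i ∈ σ} x_i ∏_{j ∈ τ} y_j ∈ S` of the pseudo-monomial
determined by the pair `(σ, τ)`. -/
def polarize {n : ℕ} (σ τ : Finset (Fin n)) : PolyS n :=
  (∏ i ∈ σ, X (Sum.inl i)) * ∏ j ∈ τ, X (Sum.inr j)

/-- The set of polarizations of the elements of the canonical form of `C`. -/
def polarizedCanonicalForm {n : ℕ} (C : Finset (Finset (Fin n))) : Set (PolyS n) :=
  {m | ∃ σ τ : Finset (Fin n), Disjoint σ τ ∧
    pseudoMonomial σ τ ∈ canonicalForm C ∧ m = polarize σ τ}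

/-- The polarized neural ideal `J ⊆ S` of a neural code `C`. -/
def polarizedNeuralIdeal {n : ℕ} (C : Finset (Finset (Fin n))) : Ideal (PolyS n) :=
  Ideal.span (polarizedCanonicalForm C)

/-- The deletion `C ∖ i` of neuron `i` from the code `C`. -/
def deleteNeuron {n : ℕ} (C : Finset (Finset (Fin n))) (i : Fin n) :
    Finset (Finset (Fin n)) :=
  C.image (fun c => c.erase i)

/-- Deletion of a set of neurons from the code `C`. -/
def deleteSet {n : ℕ} (C : Finset (Finset (Fin n))) (s : Finset (Fin n)) :
    Finset (Finset (Fin n)) :=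
  C.image (fun c => c \ s)

/-- The interval `[σ, τ] = {γ : σ ⊆ γ ⊆ τ}`. -/
def codeInterval {n : ℕ} (σ τ : Finset (Fin n)) : Finset (Finset (Fin n)) :=
  τ.powerset.filter (fun γ => σ ⊆ γ)

/-- Neuron `i` is a piercing of `C ∖ i` with piercing data `σ ⊆ τ ⊆ [n] ∖ {i}`:
`[σ,τ] ⊆ C∖i` and `C = (C∖i) ∪ [σ ∪ {i}, τ ∪ {i}]`. -/
def IsPiercingWith {n : ℕ} (C : Finset (Finset (Fin n))) (i : Fin n)
    (σ τ : Finset (Fin n)) : Prop :=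
  σ ⊆ τ ∧ i ∉ τ ∧ codeInterval σ τ ⊆ deleteNeuron C i ∧
    C = deleteNeuron C i ∪ codeInterval (insert i σ) (insert i τ)

/-- Neuron `i` is a `k`-piercing of `C ∖ i`. -/
def IsPiercing {n : ℕ} (C : Finset (Finset (Fin n))) (i : Fin n) (k : ℕ) : Prop :=
  ∃ σ τ : Finset (Fin n), IsPiercingWith C i σ τ ∧ τ.card = σ.card + k

/-- A code is inductively pierced if it is `{∅}` or some neuron is a `k`-piercing of the
code with it deleted, and the deleted code is inductively pierced. -/
inductive InductivelyPierced {n : ℕ} : Finset (Finset (Fin n)) → Prop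
  | base : InductivelyPierced {∅}
  | step (C : Finset (Finset (Fin n))) (i : Fin n) (k : ℕ) :
      IsPiercing C i k → InductivelyPierced (deleteNeuron C i) → InductivelyPierced C

/-- A piercing order for the code `C`: an ordering `ord 0, ord 1, …, ord (n-1)` of the
neurons together with piercing data `(sig j, tau j)` such that each `ord j` is a
piercing of the code obtained from `C` by deleting the later neurons. -/
structure PiercingOrder {n : ℕ} (C : Finset (Finset (Fin n))) where
  ord : Fin n ≃ Fin n
  sig : Fin n → Finset (Fin n)
  tau : Fin n → Finset (Fin n)
  piercing : ∀ j : Fin n,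
    IsPiercingWith
      (deleteSet C (Finset.univ.filter (fun i => ∃ m : Fin n, j < m ∧ ord m = i)))
      (ord j) (sig j) (tau j)

/-- The rank of the piercing at step `j` of a piercing order. -/
def PiercingOrder.kOf {n : ℕ} {C : Finset (Finset (Fin n))} (P : PiercingOrder C)
    (j : Fin n) : ℕ :=
  (P.tau j).card - (P.sig j).card

/-- `j_k`: the number of `k`-piercings in a piercing order. -/
def PiercingOrder.jnum {n : ℕ} {C : Finset (Finset (Fin n))} (P : PiercingOrder C)
    (k : ℕ) : ℕ :=
  (Finset.univ.filter (fun j : Fin n => P.kOf j = k)).card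

/-- `j_{k,v}`: the number of `k`-piercings contained in exactly `v` other place fields
(`|σ| = v`) in a piercing order. -/
def PiercingOrder.jnum2 {n : ℕ} {C : Finset (Finset (Fin n))} (P : PiercingOrder C)
    (k v : ℕ) : ℕ :=
  (Finset.univ.filter (fun j : Fin n => P.kOf j = k ∧ (P.sig j).card = v)).card

/-- The piercing ideal `p_i = (x_j : j ∈ [n]∖({i} ∪ τ)) + (y_j : j ∈ σ)`. -/
def piercingIdeal {n : ℕ} (i : Fin n) (σ τ : Finset (Fin n)) : Ideal (PolyS n) :=
  Ideal.span ({m | ∃ j : Fin n, j ≠ i ∧ j ∉ τ ∧ m = X (Sum.inl j)} ∪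
    {m | ∃ j ∈ σ, m = X (Sum.inr j)})

/-! ### Multigraded structure on `S` -/

/-- The multidegree `(u, v)` of an exponent vector: total degree in the `x`'s and in
the `y`'s, where `deg x_i = (1,0)` and `deg y_i = (0,1)`. -/
def mdeg {n : ℕ} (d : SV n →₀ ℕ) : ℕ × ℕ :=
  (∑ i : Fin n, d (Sum.inl i), ∑ i : Fin n, d (Sum.inr i))

/-- The total degree of an exponent vector in the standard grading. -/
def sdeg {n : ℕ} (d : SV n →₀ ℕ) : ℕ := ∑ v : SV n, d v

/-- The multidegree of a squarefree set of variables. -/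
def tdegT {n : ℕ} (T : Finset (SV n)) : ℕ × ℕ :=
  ((T.filter (fun v => v.isLeft = true)).card, (T.filter (fun v => v.isLeft ≠ true)).card)

/-- The multidegree-`(u,v)` homogeneous component of `S`, as an `F2`-subspace. -/
def homogComp (n : ℕ) (uv : ℕ × ℕ) : Submodule F2 (PolyS n) where
  carrier := {f | ∀ d ∈ f.support, mdeg d = uv}
  add_mem' := by
    intro a b ha hb d hd
    rcases Finset.mem_union.mp (MvPolynomial.support_add hd) with h | h
    · exact ha d h
    · exact hb d h
  zero_mem' := by intro d hd; simp at hd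
  smul_mem' := by
    intro c f hf d hd
    exact hf d (MvPolynomial.support_smul hd)

/-- The degree-`i` homogeneous component of `S` in the standard grading. -/
def homogComp1 (n : ℕ) (i : ℕ) : Submodule F2 (PolyS n) where
  carrier := {f | ∀ d ∈ f.support, sdeg d = i}
  add_mem' := by
    intro a b ha hb d hd
    rcases Finset.mem_union.mp (MvPolynomial.support_add hd) with h | h
    · exact ha d h
    · exact hb d h
  zero_mem' := by intro d hd; simp at hd
  smul_mem' := by
    intro c f hf d hd
    exact hf d (MvPolynomial.support_smul hd)

/-! ### Koszul complex computing `Tor^S_•(M, F2)` and Betti numbers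

`Tor^S_w(M, F2)` is computed as the `w`-th homology of `K ⊗_S M` where `K` is the
Koszul resolution of `F2 = S/(x_1,…,y_n)` on the `2n` variables.  (Over `F2` no signs
are needed.)  Graded and multigraded Betti numbers are the dimensions of the
corresponding graded components. -/

section Koszul

variable (n : ℕ) (M : Type) [AddCommGroup M] [Module (PolyS n) M]
  [Module F2 M] [IsScalarTower F2 (PolyS n) M]

/-- Basis indices in homological degree `w` of the Koszul complex: `w`-subsets of the
variables. -/
abbrev KIdx (w : ℕ) : Type := {T : Finset (SV n) // T.card = w}

/-- Homological degree `w` of `K ⊗_S M`. -/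
abbrev kC (w : ℕ) : Type := KIdx n w → M

/-- The Koszul differential `(K ⊗_S M)_{w+1} → (K ⊗_S M)_w` (over `F2`, signs are
irrelevant): `d f T = ∑_{i ∉ T} x_i • f (T ∪ {i})`. -/
def kd (w : ℕ) : kC n M (w + 1) →ₗ[PolyS n] kC n M w where
  toFun f T := ∑ i ∈ T.1ᶜ.attach,
    (X i.1 : PolyS n) • f ⟨insert i.1 T.1, by
      rw [Finset.card_insert_of_notMem (Finset.mem_compl.mp i.2), T.2]⟩
  map_add' f g := by
    funext T
    simp [Pi.add_apply, smul_add, Finset.sum_add_distrib]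
  map_smul' c f := by
    funext T
    simp only [Pi.smul_apply, RingHom.id_apply, Finset.smul_sum]
    exact Finset.sum_congr rfl (fun i _ => smul_comm _ _ _)

/-- The cycles of `K ⊗_S M` in homological degree `w`. -/
def kcycles : (w : ℕ) → Submodule (PolyS n) (kC n M w)
  | 0 => ⊤
  | (w + 1) => LinearMap.ker (kd n M w)

/-- The boundaries of `K ⊗_S M` in homological degree `w`. -/
def kboundaries (w : ℕ) : Submodule (PolyS n) (kC n M w) :=
  LinearMap.range (kd n M w)

/-- The `w`-th homology of `K ⊗_S M`, i.e. `Tor^S_w(M, F2)`. -/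
def kHomology (w : ℕ) : Type :=
  ↥(kcycles n M w) ⧸ ((kboundaries n M w).comap (kcycles n M w).subtype)

instance (w : ℕ) : AddCommGroup (kHomology n M w) := by
  unfold kHomology; infer_instance

instance (w : ℕ) : Module (PolyS n) (kHomology n M w) := by
  unfold kHomology; infer_instance

instance (w : ℕ) : Module F2 (kHomology n M w) := by
  unfold kHomology; infer_instance

/-- The (total) Betti number `β_w(M) = dim_{F2} Tor^S_w(M, F2)`. -/
def bettiNum (w : ℕ) : ℕ := Module.finrank F2 (kHomology n M w)

/-- Shifted graded component: the degree `uv - t` component of a multigraded module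
with components `g`, interpreted as `⊥` when `t ≰ uv`. -/
def shiftComp (g : ℕ × ℕ → Submodule F2 M) (uv t : ℕ × ℕ) : Submodule F2 M :=
  if t.1 ≤ uv.1 ∧ t.2 ≤ uv.2 then g (uv.1 - t.1, uv.2 - t.2) else ⊥

/-- The multidegree-`uv` component of `(K ⊗_S M)_w`, for a module `M` whose
multigrading is given by `g`; the basis element `e_T` has multidegree `tdegT T`. -/
def gradedKC (g : ℕ × ℕ → Submodule F2 M) (w : ℕ) (uv : ℕ × ℕ) :
    Submodule F2 (kC n M w) :=
  Submodule.pi Set.univ (fun T : KIdx n w => shiftComp (M := M) g uv (tdegT T.1))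

/-- The multigraded Betti number `β_{w,u,v}(M) = dim_{F2} Tor^S_w(M, F2)_{(u,v)}`:
the dimension of the `(u,v)`-component of the `w`-th Koszul homology. -/
def bettiNumM (g : ℕ × ℕ → Submodule F2 M) (w : ℕ) (uv : ℕ × ℕ) : ℕ :=
  Module.finrank F2
      ↥(gradedKC n M g w uv ⊓ (kcycles n M w).restrictScalars F2) -
    Module.finrank F2
      ↥(gradedKC n M g w uv ⊓ (kcycles n M w).restrictScalars F2 ⊓
        (kboundaries n M w).restrictScalars F2)

/-- The degree-`i` component of `(K ⊗_S M)_w` in the standard grading, for a module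
`M` whose grading is given by `g1`; each basis element `e_T` has degree `w`. -/
def gradedKC1 (g1 : ℕ → Submodule F2 M) (w i : ℕ) : Submodule F2 (kC n M w) :=
  Submodule.pi Set.univ
    (fun _ : KIdx n w => if w ≤ i then g1 (i - w) else (⊥ : Submodule F2 M))

/-- The graded Betti number `β_{w,i}(M) = dim_{F2} Tor^S_w(M, F2)_i` in the standard
grading. -/
def bettiNumGr (g1 : ℕ → Submodule F2 M) (w i : ℕ) : ℕ :=
  Module.finrank F2
      ↥(gradedKC1 n M g1 w i ⊓ (kcycles n M w).restrictScalars F2) -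
    Module.finrank F2
      ↥(gradedKC1 n M g1 w i ⊓ (kcycles n M w).restrictScalars F2 ⊓
        (kboundaries n M w).restrictScalars F2)

end Koszul

/-! ### Betti numbers of quotients `S/J` and of ideals `J` -/

/-- The multigrading on `S ⧸ J` induced from `S` (for homogeneous `J`). -/
def quotGradingM {n : ℕ} (J : Ideal (PolyS n)) (uv : ℕ × ℕ) :
    Submodule F2 (PolyS n ⧸ J) :=
  (homogComp n uv).map (Ideal.Quotient.mkₐ F2 J).toLinearMap

/-- The standard grading on `S ⧸ J` induced from `S` (for homogeneous `J`). -/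
def quotGrading1 {n : ℕ} (J : Ideal (PolyS n)) (i : ℕ) :
    Submodule F2 (PolyS n ⧸ J) :=
  (homogComp1 n i).map (Ideal.Quotient.mkₐ F2 J).toLinearMap

/-- The standard grading on an ideal `J ⊆ S` viewed as an `S`-module. -/
def idealGrading1 {n : ℕ} (J : Ideal (PolyS n)) (i : ℕ) : Submodule F2 ↥J :=
  (homogComp1 n i).comap ((J.subtype).restrictScalars F2)

/-- `β_w(S/J)`. -/
def quotBetti {n : ℕ} (J : Ideal (PolyS n)) (w : ℕ) : ℕ :=
  bettiNum n (PolyS n ⧸ J) w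

/-- The graded Betti number `β_{w,i}(S/J)`. -/
def quotBettiGr {n : ℕ} (J : Ideal (PolyS n)) (w i : ℕ) : ℕ :=
  bettiNumGr n (PolyS n ⧸ J) (quotGrading1 J) w i

/-- The multigraded Betti number `β_{w,u,v}(S/J)`. -/
def quotBettiM {n : ℕ} (J : Ideal (PolyS n)) (w : ℕ) (uv : ℕ × ℕ) : ℕ :=
  bettiNumM n (PolyS n ⧸ J) (quotGradingM J) w uv

/-- The graded Betti number `β_{w,i}(J)` of an ideal viewed as an `S`-module. -/
def idealBettiGr {n : ℕ} (J : Ideal (PolyS n)) (w i : ℕ) : ℕ :=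
  bettiNumGr n ↥J (idealGrading1 J) w i

/-- The Castelnuovo–Mumford regularity of the ideal `J`:
`reg J = max { i - w : β_{w,i}(J) ≠ 0 }`. -/
def idealRegularity {n : ℕ} (J : Ideal (PolyS n)) : ℕ :=
  sSup {r : ℕ | ∃ w i : ℕ, idealBettiGr J w i ≠ 0 ∧ i = w + r}

/-- The projective dimension of `S/J`: the largest `w` with `β_w(S/J) ≠ 0`. -/
def quotPdim {n : ℕ} (J : Ideal (PolyS n)) : ℕ :=
  sSup {w : ℕ | quotBetti J w ≠ 0}

/-- Integer binomial coefficient with the convention `binom a b = 0` unless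
`0 ≤ b ≤ a`. -/
def binom (a b : ℤ) : ℤ :=
  if 0 ≤ a ∧ 0 ≤ b then ((a.toNat).choose b.toNat : ℤ) else 0

end NeuralCore



section AuxNeural
variable {n : ℕ}

lemma prodInd {α : Type*} [DecidableEq α] (s v : Finset α) :
    ∏ i ∈ s, (if i ∈ v then (1:F2) else 0) = if s ⊆ v then 1 else 0 := by
  by_cases h : s ⊆ v
  · rw [if_pos h]
    exact Finset.prod_eq_one fun i hi => if_pos (h hi)
  · rw [if_neg h]
    obtain ⟨i, hi, hiv⟩ := Finset.not_subset.mp h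
    exact Finset.prod_eq_zero hi (if_neg hiv)

lemma prodIndC {α : Type*} [DecidableEq α] (s v : Finset α) :
    ∏ i ∈ s, (if i ∈ v then (0:F2) else 1) = if Disjoint s v then 1 else 0 := by
  by_cases h : Disjoint s v
  · rw [if_pos h]
    exact Finset.prod_eq_one fun i hi => if_neg (Finset.disjoint_left.mp h hi)
  · rw [if_neg h]
    obtain ⟨i, hi, hiv⟩ := Finset.not_disjoint_iff.mp h
    exact Finset.prod_eq_zero hi (if_pos hiv)

lemma iteF2 {c : Prop} [Decidable c] (h : (if c then (1:F2) else 0) = 1) : c := by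
  by_contra hc; rw [if_neg hc] at h; exact zero_ne_one h

lemma iteF2' {c : Prop} [Decidable c] (h : (if c then (1:F2) else 0) ≠ 0) : c := by
  by_contra hc; exact h (if_neg hc)

lemma evalPseudo (σ τ v : Finset (Fin n)) :
    eval (fun i => if i ∈ v then (1:F2) else 0) (pseudoMonomial σ τ)
      = if σ ⊆ v ∧ Disjoint τ v then 1 else 0 := by
  rw [pseudoMonomial, map_mul, map_prod, map_prod]
  simp only [map_sub, map_one, eval_X]
  have h2 : ∏ j ∈ τ, (1 - if j ∈ v then (1:F2) else 0)
      = ∏ j ∈ τ, (if j ∈ v then (0:F2) else 1) :=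
    Finset.prod_congr rfl fun j _ => by split_ifs <;> ring
  rw [h2, prodInd, prodIndC]
  by_cases h1 : σ ⊆ v <;> by_cases h3 : Disjoint τ v <;> simp [h1, h3]

/-- The indicator point of the pair `(a, b)` in `F2^{2n}`. -/
def qpt (a b : Finset (Fin n)) : SV n → F2 :=
  Sum.elim (fun i => if i ∈ a then 1 else 0) (fun j => if j ∈ b then 1 else 0)

lemma evalPolarize (σ τ a b : Finset (Fin n)) :
    eval (qpt a b) (polarize σ τ) = if σ ⊆ a ∧ τ ⊆ b then 1 else 0 := by
  rw [polarize, map_mul, map_prod, map_prod]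
  simp only [eval_X, qpt, Sum.elim_inl, Sum.elim_inr]
  rw [prodInd, prodInd]
  by_cases h1 : σ ⊆ a <;> by_cases h2 : τ ⊆ b <;> simp [h1, h2]

lemma pseudoInj {σ τ σ' τ' : Finset (Fin n)} (h : Disjoint σ τ) (h' : Disjoint σ' τ')
    (heq : pseudoMonomial σ τ = pseudoMonomial σ' τ') : σ = σ' ∧ τ = τ' := by
  have E : ∀ v : Finset (Fin n),
      (if σ ⊆ v ∧ Disjoint τ v then (1:F2) else 0)
        = if σ' ⊆ v ∧ Disjoint τ' v then 1 else 0 := fun v => by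
    rw [← evalPseudo, ← evalPseudo, heq]
  have e1 : σ' ⊆ σ ∧ Disjoint τ' σ :=
    iteF2 ((E σ).symm.trans (if_pos ⟨subset_rfl, h.symm⟩))
  have e2 : σ ⊆ σ' ∧ Disjoint τ σ' :=
    iteF2 ((E σ').trans (if_pos ⟨subset_rfl, h'.symm⟩))
  have hστ : σ ⊆ τᶜ := fun i hi => Finset.mem_compl.mpr (Finset.disjoint_left.mp h hi)
  have hστ' : σ' ⊆ τ'ᶜ := fun i hi =>
    Finset.mem_compl.mpr (Finset.disjoint_left.mp h' hi)
  have e3 : σ' ⊆ τᶜ ∧ Disjoint τ' τᶜ :=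
    iteF2 ((E τᶜ).symm.trans (if_pos ⟨hστ, disjoint_compl_right⟩))
  have e4 : σ ⊆ τ'ᶜ ∧ Disjoint τ τ'ᶜ :=
    iteF2 ((E τ'ᶜ).trans (if_pos ⟨hστ', disjoint_compl_right⟩))
  exact ⟨subset_antisymm e2.1 e1.1,
    subset_antisymm (disjoint_compl_right_iff.mp e4.2)
      (disjoint_compl_right_iff.mp e3.2)⟩

lemma pseudoDvd {σ τ σ' τ' : Finset (Fin n)} (hσ : σ' ⊆ σ) (hτ : τ' ⊆ τ) :
    pseudoMonomial σ' τ' ∣ pseudoMonomial σ τ := by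
  refine ⟨(∏ i ∈ σ \ σ', X i) * ∏ j ∈ τ \ τ', (1 - X j), ?_⟩
  rw [pseudoMonomial, pseudoMonomial, ← Finset.prod_sdiff hσ, ← Finset.prod_sdiff hτ]
  ring

/-- Key step: two canonical-form pseudo-monomials with nested index sets coincide. -/
lemma keyEq {C : Finset (Finset (Fin n))} {σ τ σ' τ' : Finset (Fin n)}
    (hd : Disjoint σ τ) (hd' : Disjoint σ' τ')
    (hcf : pseudoMonomial σ τ ∈ canonicalForm C)
    (hcf' : pseudoMonomial σ' τ' ∈ canonicalForm C)
    (hσ : σ' ⊆ σ) (hτ : τ' ⊆ τ) : σ' = σ ∧ τ' = τ := by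
  have heq : pseudoMonomial σ' τ' = pseudoMonomial σ τ :=
    hcf.2.2 _ ⟨σ', τ', hd', rfl⟩ hcf'.2.1 (pseudoDvd hσ hτ)
  obtain ⟨h1, h2⟩ := pseudoInj hd' hd heq
  exact ⟨h1, h2⟩

end AuxNeural

/-- The polarized canonical form is a minimal generating set for the
polarized neural ideal: no element divides another, and no proper subset generates. -/
theorem polarizedCanonicalForm_minimal_generating_set {n : ℕ}
    (C : Finset (Finset (Fin n))) (hC : ∅ ∈ C) :
    (∀ g ∈ polarizedCanonicalForm C, ∀ g' ∈ polarizedCanonicalForm C,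
      g' ∣ g → g' = g) ∧
    (∀ G : Set (PolyS n), G ⊂ polarizedCanonicalForm C →
      Ideal.span G ≠ polarizedNeuralIdeal C) := by
  constructor
  · rintro g ⟨σ, τ, hd, hcf, rfl⟩ g' ⟨σ', τ', hd', hcf', rfl⟩ hdvd
    obtain ⟨c, hc⟩ := hdvd
    have h1 : (1 : F2) = (if σ' ⊆ σ ∧ τ' ⊆ τ then (1:F2) else 0) * eval (qpt σ τ) c := by
      have := congrArg (eval (qpt σ τ)) hc
      rwa [map_mul, evalPolarize, evalPolarize, if_pos ⟨subset_rfl, subset_rfl⟩] at this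
    have hcond : σ' ⊆ σ ∧ τ' ⊆ τ := by
      by_contra hcn
      rw [if_neg hcn, zero_mul] at h1
      exact one_ne_zero h1
    obtain ⟨h1', h2'⟩ := keyEq hd hd' hcf hcf' hcond.1 hcond.2
    rw [h1', h2']
  · intro G hG hspan
    obtain ⟨m, hmP, hmG⟩ := Set.exists_of_ssubset hG
    obtain ⟨σ, τ, hd, hcf, rfl⟩ := hmP
    have hmem : polarize σ τ ∈ Ideal.span G := by
      rw [hspan]
      exact Ideal.subset_span ⟨σ, τ, hd, hcf, rfl⟩
    obtain ⟨c, hcsup, hcsum⟩ := Submodule.mem_span_set.mp hmem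
    have h1 : (1 : F2) = c.sum fun mi r => eval (qpt σ τ) r * eval (qpt σ τ) mi := by
      have := congrArg (eval (qpt σ τ)) hcsum
      rw [map_finsuppSum] at this
      simp only [smul_eq_mul, map_mul] at this
      rw [evalPolarize, if_pos ⟨subset_rfl, subset_rfl⟩] at this
      exact this.symm
    have hex : ∃ mi ∈ c.support, eval (qpt σ τ) mi ≠ 0 := by
      by_contra hall
      push_neg at hall
      rw [Finsupp.sum, Finset.sum_eq_zero (fun mi hmi => by
        rw [hall mi hmi, mul_zero])] at h1
      exact one_ne_zero h1
    obtain ⟨mi, hmi, hmine⟩ := hex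
    have hmiG : mi ∈ G := hcsup hmi
    obtain ⟨σ', τ', hd', hcf', rfl⟩ := hG.subset hmiG
    rw [evalPolarize] at hmine
    obtain ⟨hsub1, hsub2⟩ := iteF2' hmine
    obtain ⟨h1', h2'⟩ := keyEq hd hd' hcf hcf' hsub1 hsub2
    rw [h1', h2'] at hmiG
    exact hmG hmiG
end

section
/- Let C be a neural code on n neurons such that neuron n is a k-piercing of C∖{n} with piercing data σ ⊆ τ ⊆ [n−1], let J_n, J_{n−1} ⊆ S be the polarized neural ideals of C and C∖{n} respectively, and let p_n = (x_i : i ∈ [n−1]∖τ) + (y_j : j ∈ σ). Then the colon ideal satisfies (J_n :_S x_n) = p_n, the sum satisfies J_n + (x_n) = J_{n−1} + (x_n), and consequently the sequence 0 → S/p_n →^{·x_n} S/J_n → S/(J_{n−1} + (x_n)) → 0 is exact. -/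
open MvPolynomial Finset

noncomputable section Aux
open MvPolynomial Finset

variable {n : ℕ}

/-- exponent vector of a polarized squarefree monomial -/
def expOf (a b : Finset (Fin n)) : SV n →₀ ℕ :=
  (∑ i ∈ a, Finsupp.single (Sum.inl i) 1) + ∑ j ∈ b, Finsupp.single (Sum.inr j) 1

lemma expOf_inl (a b : Finset (Fin n)) (j : Fin n) :
    expOf a b (Sum.inl j) = if j ∈ a then 1 else 0 := by
  classical
  simp only [expOf, Finsupp.add_apply, Finsupp.finset_sum_apply, Finsupp.single_apply]
  rw [Finset.sum_congr rfl (fun x _ => by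
    simp only [Sum.inl.injEq] : ∀ x ∈ a, (if (Sum.inl x : SV n) = Sum.inl j then (1:ℕ) else 0)
      = if x = j then 1 else 0)]
  simp [Finset.sum_ite_eq']

lemma expOf_inr (a b : Finset (Fin n)) (j : Fin n) :
    expOf a b (Sum.inr j) = if j ∈ b then 1 else 0 := by
  classical
  simp only [expOf, Finsupp.add_apply, Finsupp.finset_sum_apply, Finsupp.single_apply]
  rw [Finset.sum_congr rfl (fun x _ => by
    simp only [Sum.inr.injEq] : ∀ x ∈ b, (if (Sum.inr x : SV n) = Sum.inr j then (1:ℕ) else 0)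
      = if x = j then 1 else 0)]
  simp [Finset.sum_ite_eq']

lemma prod_X_eq {α : Type} (s : Finset α) (g : α → SV n) :
    (∏ i ∈ s, (X (g i) : PolyS n)) = monomial (∑ i ∈ s, Finsupp.single (g i) 1) 1 := by
  classical
  induction s using Finset.cons_induction with
  | empty => simp
  | cons i s hi ih =>
      rw [Finset.prod_cons, Finset.sum_cons, ih, X, monomial_mul, one_mul]

lemma polarize_eq_monomial (a b : Finset (Fin n)) :
    polarize a b = monomial (expOf a b) 1 := by
  rw [polarize, prod_X_eq, prod_X_eq, monomial_mul, one_mul, expOf]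

end Aux
noncomputable section Aux2
open MvPolynomial Finset

variable {n : ℕ}

/-- Evaluation of a polynomial of `R` at the indicator point of a codeword. -/
def ptEval (v : Finset (Fin n)) : PolyR n →+* F2 :=
  eval (fun j => if j ∈ v then 1 else 0)

lemma ptEval_pm (v a b : Finset (Fin n)) :
    ptEval v (pseudoMonomial a b) = if a ⊆ v ∧ Disjoint v b then 1 else 0 := by
  classical
  rw [pseudoMonomial, ptEval]
  simp only [map_mul, map_prod, map_sub, map_one, eval_X]
  by_cases h1 : a ⊆ v
  · by_cases h2 : Disjoint v b
    · rw [if_pos ⟨h1, h2⟩]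
      have e1 : (∏ i ∈ a, (if i ∈ v then (1:F2) else 0)) = 1 :=
        Finset.prod_eq_one fun i hi => by rw [if_pos (h1 hi)]
      have e2 : (∏ j ∈ b, ((1:F2) - if j ∈ v then 1 else 0)) = 1 :=
        Finset.prod_eq_one fun j hj => by
          rw [if_neg (fun hjv => Finset.disjoint_left.mp h2 hjv hj), sub_zero]
      rw [e1, e2, one_mul]
    · rw [if_neg (by tauto)]
      obtain ⟨j, hjv, hjb⟩ := Finset.not_disjoint_iff.mp h2
      rw [Finset.prod_eq_zero hjb (by rw [if_pos hjv, sub_self]), mul_zero]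
  · rw [if_neg (by tauto)]
    obtain ⟨i, hia, hiv⟩ := Finset.not_subset.mp h1
    rw [Finset.prod_eq_zero hia (if_neg hiv : (if i ∈ v then (1:F2) else 0) = 0), zero_mul]

lemma ptEval_eq_zero_of_mem {C : Finset (Finset (Fin n))} {v : Finset (Fin n)}
    (hv : v ∈ C) {f : PolyR n} (hf : f ∈ neuralIdeal C) : ptEval v f = 0 := by
  induction hf using Submodule.span_induction with
  | mem f hf =>
      obtain ⟨w, hw, rfl⟩ := hf
      rw [rhoPoly, ptEval_pm, if_neg]
      rintro ⟨hwv, hvw⟩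
      have : v = w := Finset.Subset.antisymm
        (fun x hx => by
          by_contra hxw
          exact Finset.disjoint_left.mp hvw hx (Finset.mem_compl.mpr hxw)) hwv
      exact hw (this ▸ hv)
  | zero => simp
  | add x y _ _ hx hy => rw [map_add, hx, hy, add_zero]
  | smul r x _ hx => rw [smul_eq_mul, map_mul, hx, mul_zero]

/-- Pseudo-monomials in a neural ideal vanish on the code. -/
lemma crit_of_mem {C : Finset (Finset (Fin n))} {a b : Finset (Fin n)}
    (hm : pseudoMonomial a b ∈ neuralIdeal C) :
    ∀ v ∈ C, ¬(a ⊆ v ∧ Disjoint v b) := by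
  intro v hv hcond
  have h0 := ptEval_eq_zero_of_mem hv hm
  rw [ptEval_pm, if_pos hcond] at h0
  exact one_ne_zero h0

end Aux2
noncomputable section Aux3
open MvPolynomial Finset

variable {n : ℕ}

lemma mem_of_crit_aux {C : Finset (Finset (Fin n))} :
    ∀ (m : ℕ) (a b : Finset (Fin n)), ((a ∪ b)ᶜ).card = m → Disjoint a b →
      (∀ v ∈ C, ¬(a ⊆ v ∧ Disjoint v b)) → pseudoMonomial a b ∈ neuralIdeal C := by
  intro m
  induction m using Nat.strong_induction_on with
  | _ m ih =>
    intro a b hcard hd hcrit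
    by_cases hu : ((a ∪ b)ᶜ : Finset (Fin n)) = ∅
    · have hb : b = aᶜ := by
        ext j
        constructor
        · intro hj
          exact Finset.mem_compl.mpr fun hja => Finset.disjoint_left.mp hd hja hj
        · intro hj
          have hjab : j ∈ a ∪ b := by
            by_contra h
            exact Finset.notMem_empty j (hu ▸ Finset.mem_compl.mpr h)
          rcases Finset.mem_union.mp hjab with h | h
          · exact absurd h (Finset.mem_compl.mp hj)
          · exact h
      subst hb
      have ha : a ∉ C := fun hac =>
        hcrit a hac ⟨Finset.Subset.refl a, disjoint_compl_right⟩
      exact Ideal.subset_span ⟨a, ha, rfl⟩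
    · obtain ⟨j, hj⟩ := Finset.nonempty_iff_ne_empty.mpr hu
      have hja : j ∉ a := fun h => Finset.mem_compl.mp hj (Finset.mem_union_left _ h)
      have hjb : j ∉ b := fun h => Finset.mem_compl.mp hj (Finset.mem_union_right _ h)
      have hm0 : 0 < m := hcard ▸ Finset.card_pos.mpr ⟨j, hj⟩
      have hsplit : pseudoMonomial a b
          = pseudoMonomial (insert j a) b + pseudoMonomial a (insert j b) := by
        simp only [pseudoMonomial, Finset.prod_insert hja, Finset.prod_insert hjb]
        ring
      have hcard1 : ∀ s t : Finset (Fin n), j ∉ s ∪ t → s ∪ t ∪ {j} = insert j (s ∪ t) →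
          True := fun _ _ _ _ => trivial
      rw [hsplit]
      have h1 : (((insert j a) ∪ b)ᶜ : Finset (Fin n)).card < m := by
        rw [Finset.insert_union, Finset.compl_insert]
        rw [Finset.card_erase_of_mem hj, hcard]
        omega
      have h2 : ((a ∪ (insert j b))ᶜ : Finset (Fin n)).card < m := by
        rw [Finset.union_insert, Finset.compl_insert]
        rw [Finset.card_erase_of_mem hj, hcard]
        omega
      refine Ideal.add_mem _ (ih _ h1 _ _ rfl ?_ ?_) (ih _ h2 _ _ rfl ?_ ?_)
      · exact Finset.disjoint_insert_left.mpr ⟨hjb, hd⟩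
      · intro v hv ⟨hsub, hdisj⟩
        exact hcrit v hv ⟨(Finset.subset_insert j a).trans hsub, hdisj⟩
      · exact Finset.disjoint_insert_right.mpr ⟨hja, hd⟩
      · intro v hv ⟨hsub, hdisj⟩
        exact hcrit v hv ⟨hsub, hdisj.mono_right (Finset.subset_insert j b)⟩

lemma mem_of_crit {C : Finset (Finset (Fin n))} {a b : Finset (Fin n)} (hd : Disjoint a b)
    (hcrit : ∀ v ∈ C, ¬(a ⊆ v ∧ Disjoint v b)) : pseudoMonomial a b ∈ neuralIdeal C :=
  mem_of_crit_aux _ a b rfl hd hcrit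

lemma subset_of_pm_dvd {a b c d : Finset (Fin n)} (hcd : Disjoint c d)
    (h : pseudoMonomial a b ∣ pseudoMonomial c d) : a ⊆ c ∧ b ⊆ d := by
  obtain ⟨e, he⟩ := h
  constructor
  · have h1 := congrArg (ptEval c) he
    rw [map_mul, ptEval_pm, ptEval_pm, if_pos ⟨Finset.Subset.refl c, hcd⟩] at h1
    by_cases hcond : a ⊆ c ∧ Disjoint c b
    · exact hcond.1
    · rw [if_neg hcond, zero_mul] at h1
      exact absurd h1 one_ne_zero
  · have hsub : c ⊆ dᶜ := fun x hx =>
      Finset.mem_compl.mpr fun hxd => Finset.disjoint_left.mp hcd hx hxd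
    have h1 := congrArg (ptEval dᶜ) he
    rw [map_mul, ptEval_pm, ptEval_pm, if_pos ⟨hsub, disjoint_compl_left⟩] at h1
    by_cases hcond : a ⊆ dᶜ ∧ Disjoint (dᶜ : Finset (Fin n)) b
    · intro x hxb
      by_contra hxd
      exact Finset.disjoint_left.mp hcond.2 (Finset.mem_compl.mpr hxd) hxb
    · rw [if_neg hcond, zero_mul] at h1
      exact absurd h1 one_ne_zero

lemma pm_injective {a b c d : Finset (Fin n)} (hab : Disjoint a b) (hcd : Disjoint c d)
    (h : pseudoMonomial a b = pseudoMonomial c d) : a = c ∧ b = d := by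
  obtain ⟨h1, h2⟩ := subset_of_pm_dvd hcd
    (⟨1, by rw [mul_one, h]⟩ : pseudoMonomial a b ∣ pseudoMonomial c d)
  obtain ⟨h3, h4⟩ := subset_of_pm_dvd hab
    (⟨1, by rw [mul_one, h]⟩ : pseudoMonomial c d ∣ pseudoMonomial a b)
  exact ⟨Finset.Subset.antisymm h1 h3, Finset.Subset.antisymm h2 h4⟩

lemma polarize_mem {D : Finset (Finset (Fin n))} :
    ∀ (m : ℕ) (a b : Finset (Fin n)), a.card + b.card = m → Disjoint a b →
      pseudoMonomial a b ∈ neuralIdeal D → polarize a b ∈ polarizedNeuralIdeal D := by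
  intro m
  induction m using Nat.strong_induction_on with
  | _ m ih =>
    intro a b hm hd hmem
    by_cases hmin : ∀ g, IsPseudoMonomial g → g ∈ neuralIdeal D → g ∣ pseudoMonomial a b →
        g = pseudoMonomial a b
    · exact Ideal.subset_span ⟨a, b, hd, ⟨⟨a, b, hd, rfl⟩, hmem, hmin⟩, rfl⟩
    · push_neg at hmin
      obtain ⟨g, ⟨a', b', hd', rfl⟩, hg2, hg3, hg4⟩ := hmin
      obtain ⟨hsa, hsb⟩ := subset_of_pm_dvd hd hg3
      have hne : a' ≠ a ∨ b' ≠ b := by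
        by_contra h
        push_neg at h
        exact hg4 (by rw [h.1, h.2])
      have hlt : a'.card + b'.card < m := by
        have h1 := Finset.card_le_card hsa
        have h2 := Finset.card_le_card hsb
        rcases hne with h | h
        · have := Finset.card_lt_card (Finset.ssubset_iff_subset_ne.mpr ⟨hsa, h⟩)
          omega
        · have := Finset.card_lt_card (Finset.ssubset_iff_subset_ne.mpr ⟨hsb, h⟩)
          omega
      have hp' := ih _ hlt a' b' rfl hd' hg2
      have heq : polarize a b = polarize a' b' *
          ((∏ i ∈ a \ a', X (Sum.inl i)) * ∏ j ∈ b \ b', (X (Sum.inr j) : PolyS n)) := by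
        simp only [polarize, ← Finset.prod_sdiff hsa, ← Finset.prod_sdiff hsb]
        ring
      rw [heq]
      exact Ideal.mul_mem_right _ _ hp'

lemma polarize_mem' {D : Finset (Finset (Fin n))} {a b : Finset (Fin n)} (hd : Disjoint a b)
    (hmem : pseudoMonomial a b ∈ neuralIdeal D) : polarize a b ∈ polarizedNeuralIdeal D :=
  polarize_mem _ a b rfl hd hmem

end Aux3
noncomputable section Aux4
open MvPolynomial Finset

variable {n : ℕ}

lemma not_mem_of_mem_delete {C : Finset (Finset (Fin n))} {i : Fin n} {v : Finset (Fin n)}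
    (h : v ∈ deleteNeuron C i) : i ∉ v := by
  obtain ⟨c, _, rfl⟩ := Finset.mem_image.mp h
  exact Finset.notMem_erase i c

lemma mem_delete_self {C : Finset (Finset (Fin n))} {i : Fin n} {v : Finset (Fin n)}
    (hv : v ∈ C) (hiv : i ∉ v) : v ∈ deleteNeuron C i :=
  Finset.mem_image.mpr ⟨v, hv, Finset.erase_eq_of_notMem hiv⟩

lemma mem_codeInterval {σ τ v : Finset (Fin n)} :
    v ∈ codeInterval σ τ ↔ σ ⊆ v ∧ v ⊆ τ := by
  rw [codeInterval, Finset.mem_filter, Finset.mem_powerset, and_comm]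

section WithHp

variable {C : Finset (Finset (Fin n))} {i : Fin n} {σ τ : Finset (Fin n)}
  (hp : IsPiercingWith C i σ τ)

include hp

lemma delete_subset : deleteNeuron C i ⊆ C := by
  intro v hv
  rw [hp.2.2.2]
  exact Finset.mem_union_left _ hv

lemma mem_interval_of_mem {v : Finset (Fin n)} (hv : v ∈ C) (hiv : i ∈ v) :
    v ∈ codeInterval (insert i σ) (insert i τ) := by
  rw [hp.2.2.2] at hv
  rcases Finset.mem_union.mp hv with h | h
  · exact absurd hiv (not_mem_of_mem_delete h)
  · exact h

lemma erase_mem_delete {v : Finset (Fin n)} (hv : v ∈ C) (hiv : i ∈ v) :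
    v.erase i ∈ deleteNeuron C i := by
  apply hp.2.2.1
  obtain ⟨h1, h2⟩ := mem_codeInterval.mp (mem_interval_of_mem hp hv hiv)
  rw [mem_codeInterval]
  constructor
  · intro x hx
    refine Finset.mem_erase.mpr ⟨fun hxi => hp.2.1 (hxi ▸ hp.1 hx), h1 (Finset.mem_insert_of_mem hx)⟩
  · intro x hx
    obtain ⟨hxi, hxv⟩ := Finset.mem_erase.mp hx
    rcases Finset.mem_insert.mp (h2 hxv) with h | h
    · exact absurd h hxi
    · exact h

/-- No element of the canonical form of a pierced code involves `y_i`. -/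
lemma cf_no_yi {a b : Finset (Fin n)} (hd : Disjoint a b)
    (hcf : pseudoMonomial a b ∈ canonicalForm C) : i ∉ b := by
  intro hib
  have hmem := hcf.2.1
  have hcrit := crit_of_mem hmem
  have hia : i ∉ a := fun h => Finset.disjoint_left.mp hd h hib
  have hmem' : pseudoMonomial a (b.erase i) ∈ neuralIdeal C := by
    apply mem_of_crit (hd.mono_right (Finset.erase_subset _ _))
    intro v hv ⟨h1, h2⟩
    by_cases hiv : i ∈ v
    · have hw : v.erase i ∈ C := delete_subset hp (erase_mem_delete hp hv hiv)
      refine hcrit _ hw ⟨fun x hx => Finset.mem_erase.mpr ⟨fun h => hia (h ▸ hx), h1 hx⟩, ?_⟩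
      rw [Finset.disjoint_left]
      intro x hx hxb
      obtain ⟨hxi, hxv⟩ := Finset.mem_erase.mp hx
      exact Finset.disjoint_left.mp h2 hxv (Finset.mem_erase.mpr ⟨hxi, hxb⟩)
    · refine hcrit v hv ⟨h1, ?_⟩
      rw [Finset.disjoint_left]
      intro x hxv hxb
      exact Finset.disjoint_left.mp h2 hxv
        (Finset.mem_erase.mpr ⟨fun h => hiv (h ▸ hxv), hxb⟩)
  have hdvd : pseudoMonomial a (b.erase i) ∣ pseudoMonomial a b := by
    refine ⟨1 - X i, ?_⟩
    rw [pseudoMonomial, pseudoMonomial, ← Finset.mul_prod_erase b _ hib]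
    ring
  have heq := hcf.2.2 _ ⟨a, b.erase i, hd.mono_right (Finset.erase_subset _ _), rfl⟩ hmem' hdvd
  have := (pm_injective (hd.mono_right (Finset.erase_subset _ _)) hd heq).2
  exact (Finset.erase_eq_self.mp this) hib

/-- The key structural consequence of piercing: every pseudo-monomial in the
neural ideal not involving `y_i` is divisible by a piercing-ideal variable. -/
lemma key_lemma {a b : Finset (Fin n)} (hd : Disjoint a b) (hib : i ∉ b)
    (hmem : pseudoMonomial a b ∈ neuralIdeal C) :
    (∃ j ∈ a, j ≠ i ∧ j ∉ τ) ∨ (∃ j ∈ σ, j ∈ b) := by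
  by_contra h
  push_neg at h
  obtain ⟨h1, h2⟩ := h
  have hvC : insert i (σ ∪ a) ∈ C := by
    rw [hp.2.2.2]
    apply Finset.mem_union_right
    rw [mem_codeInterval]
    constructor
    · intro x hx
      rcases Finset.mem_insert.mp hx with rfl | hx
      · exact Finset.mem_insert_self _ _
      · exact Finset.mem_insert_of_mem (Finset.mem_union_left _ hx)
    · intro x hx
      rcases Finset.mem_insert.mp hx with rfl | hx
      · exact Finset.mem_insert_self _ _
      rcases Finset.mem_union.mp hx with hx | hx
      · exact Finset.mem_insert_of_mem (hp.1 hx)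
      · by_cases hxi : x = i
        · exact hxi ▸ Finset.mem_insert_self _ _
        · exact Finset.mem_insert_of_mem (h1 x hx hxi)
  refine crit_of_mem hmem _ hvC ⟨?_, ?_⟩
  · exact fun x hx => Finset.mem_insert_of_mem (Finset.mem_union_right _ hx)
  · rw [Finset.disjoint_left]
    intro x hx hxb
    rcases Finset.mem_insert.mp hx with rfl | hx
    · exact hib hxb
    rcases Finset.mem_union.mp hx with hx | hx
    · exact h2 x hx hxb
    · exact Finset.disjoint_left.mp hd hx hxb

lemma mem_delete_ideal_of_mem {a b : Finset (Fin n)} (hd : Disjoint a b)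
    (hmem : pseudoMonomial a b ∈ neuralIdeal C) :
    pseudoMonomial a b ∈ neuralIdeal (deleteNeuron C i) :=
  mem_of_crit hd fun v hv => crit_of_mem hmem v (delete_subset hp hv)

lemma mem_ideal_of_mem_delete {a b : Finset (Fin n)} (hd : Disjoint a b) (hia : i ∉ a)
    (hmem : pseudoMonomial a b ∈ neuralIdeal (deleteNeuron C i)) :
    pseudoMonomial a b ∈ neuralIdeal C := by
  apply mem_of_crit hd
  intro v hv ⟨h1, h2⟩
  by_cases hiv : i ∈ v
  · refine crit_of_mem hmem _ (erase_mem_delete hp hv hiv)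
      ⟨fun x hx => Finset.mem_erase.mpr ⟨fun h => hia (h ▸ hx), h1 hx⟩,
        h2.mono_left (Finset.erase_subset _ _)⟩
  · exact crit_of_mem hmem v (mem_delete_self hv hiv) ⟨h1, h2⟩

end WithHp

/-- No element of the canonical form of a deleted code involves `y_i`. -/
lemma cf_delete_no_yi {C : Finset (Finset (Fin n))} {i : Fin n} {a b : Finset (Fin n)}
    (hd : Disjoint a b) (hcf : pseudoMonomial a b ∈ canonicalForm (deleteNeuron C i)) :
    i ∉ b := by
  intro hib
  have hmem := hcf.2.1
  have hcrit := crit_of_mem hmem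
  have hmem' : pseudoMonomial a (b.erase i) ∈ neuralIdeal (deleteNeuron C i) := by
    apply mem_of_crit (hd.mono_right (Finset.erase_subset _ _))
    intro v hv ⟨h1, h2⟩
    have hiv : i ∉ v := not_mem_of_mem_delete hv
    refine hcrit v hv ⟨h1, ?_⟩
    rw [Finset.disjoint_left]
    intro x hxv hxb
    exact Finset.disjoint_left.mp h2 hxv
      (Finset.mem_erase.mpr ⟨fun h => hiv (h ▸ hxv), hxb⟩)
  have hdvd : pseudoMonomial a (b.erase i) ∣ pseudoMonomial a b := by
    refine ⟨1 - X i, ?_⟩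
    rw [pseudoMonomial, pseudoMonomial, ← Finset.mul_prod_erase b _ hib]
    ring
  have heq := hcf.2.2 _ ⟨a, b.erase i, hd.mono_right (Finset.erase_subset _ _), rfl⟩ hmem' hdvd
  have := (pm_injective (hd.mono_right (Finset.erase_subset _ _)) hd heq).2
  exact (Finset.erase_eq_self.mp this) hib

end Aux4
noncomputable section Aux5
open MvPolynomial Finset

variable {n : ℕ} {C : Finset (Finset (Fin n))} {i : Fin n} {σ τ : Finset (Fin n)}

lemma sum_eq (hp : IsPiercingWith C i σ τ) :
    polarizedNeuralIdeal C ⊔ Ideal.span {(X (Sum.inl i) : PolyS n)} =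
      polarizedNeuralIdeal (deleteNeuron C i) ⊔ Ideal.span {(X (Sum.inl i) : PolyS n)} := by
  have hxdvd : ∀ (a b : Finset (Fin n)), i ∈ a →
      polarize a b ∈ Ideal.span {(X (Sum.inl i) : PolyS n)} := by
    intro a b hia
    rw [Ideal.mem_span_singleton]
    exact ⟨polarize (a.erase i) b, by
      simp only [polarize, ← Finset.mul_prod_erase a _ hia]; ring⟩
  apply le_antisymm
  · refine sup_le ?_ le_sup_right
    rw [polarizedNeuralIdeal, Ideal.span_le]
    rintro m ⟨a, b, hd, hcf, rfl⟩
    by_cases hia : i ∈ a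
    · exact Ideal.mem_sup_right (hxdvd a b hia)
    · exact Ideal.mem_sup_left (polarize_mem' hd (mem_delete_ideal_of_mem hp hd hcf.2.1))
  · refine sup_le ?_ le_sup_right
    rw [polarizedNeuralIdeal, Ideal.span_le]
    rintro m ⟨a, b, hd, hcf, rfl⟩
    by_cases hia : i ∈ a
    · exact Ideal.mem_sup_right (hxdvd a b hia)
    · exact Ideal.mem_sup_left
        (polarize_mem' hd (mem_ideal_of_mem_delete hp hd hia hcf.2.1))

lemma colon_eq (hp : IsPiercingWith C i σ τ) :
    (polarizedNeuralIdeal C).colon (Ideal.span {(X (Sum.inl i) : PolyS n)}) =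
      piercingIdeal i σ τ := by
  apply le_antisymm
  · intro f hf
    rw [Ideal.mem_colon_span_singleton] at hf
    have hf' : X (Sum.inl i) * f ∈ polarizedNeuralIdeal C := by rwa [mul_comm] at hf
    have hJ : polarizedNeuralIdeal C = Ideal.span ((fun s => monomial s (1 : F2)) ''
        {d : SV n →₀ ℕ | ∃ a b : Finset (Fin n), Disjoint a b ∧
          pseudoMonomial a b ∈ canonicalForm C ∧ d = expOf a b}) := by
      unfold polarizedNeuralIdeal polarizedCanonicalForm
      congr 1
      ext m
      constructor
      · rintro ⟨a, b, hd, hcf, rfl⟩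
        exact ⟨expOf a b, ⟨a, b, hd, hcf, rfl⟩, (polarize_eq_monomial a b).symm⟩
      · rintro ⟨d, ⟨a, b, hd, hcf, rfl⟩, rfl⟩
        exact ⟨a, b, hd, hcf, (polarize_eq_monomial a b).symm⟩
    rw [hJ, mem_ideal_span_monomial_image] at hf'
    have hP : piercingIdeal i σ τ = Ideal.span (MvPolynomial.X ''
        {v : SV n | (∃ j : Fin n, j ≠ i ∧ j ∉ τ ∧ v = Sum.inl j) ∨
          (∃ j ∈ σ, v = Sum.inr j)}) := by
      unfold piercingIdeal
      congr 1
      ext m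
      constructor
      · rintro (⟨j, h1, h2, rfl⟩ | ⟨j, h1, rfl⟩)
        · exact ⟨Sum.inl j, Or.inl ⟨j, h1, h2, rfl⟩, rfl⟩
        · exact ⟨Sum.inr j, Or.inr ⟨j, h1, rfl⟩, rfl⟩
      · rintro ⟨v, ⟨j, h1, h2, rfl⟩ | ⟨j, h1, rfl⟩, rfl⟩
        · exact Or.inl ⟨j, h1, h2, rfl⟩
        · exact Or.inr ⟨j, h1, rfl⟩
    rw [hP, mem_ideal_span_X_image]
    intro m hm
    have hmem2 : Finsupp.single (Sum.inl i) 1 + m ∈ (X (Sum.inl i) * f).support := by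
      rw [support_X_mul]
      exact Finset.mem_map.mpr ⟨m, hm, rfl⟩
    obtain ⟨d, hdD, hle⟩ := hf' _ hmem2
    obtain ⟨a, b, hd, hcf, rfl⟩ := hdD
    have hib : i ∉ b := cf_no_yi hp hd hcf
    rcases key_lemma hp hd hib hcf.2.1 with ⟨j, hja, hjne, hjτ⟩ | ⟨j, hjσ, hjb⟩
    · refine ⟨Sum.inl j, Or.inl ⟨j, hjne, hjτ, rfl⟩, ?_⟩
      have h1 := Finsupp.le_def.mp hle (Sum.inl j)
      rw [expOf_inl, if_pos hja, Finsupp.add_apply, Finsupp.single_apply,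
        if_neg (fun h => hjne (Sum.inl.inj h).symm)] at h1
      omega
    · refine ⟨Sum.inr j, Or.inr ⟨j, hjσ, rfl⟩, ?_⟩
      have h1 := Finsupp.le_def.mp hle (Sum.inr j)
      rw [expOf_inr, if_pos hjb, Finsupp.add_apply, Finsupp.single_apply,
        if_neg (by simp)] at h1
      omega
  · rw [piercingIdeal, Ideal.span_le]
    rintro m (⟨j, hji, hjτ, rfl⟩ | ⟨j, hjσ, rfl⟩)
    · rw [SetLike.mem_coe, Ideal.mem_colon_span_singleton]
      have hd : Disjoint ({i, j} : Finset (Fin n)) (∅ : Finset (Fin n)) :=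
        Finset.disjoint_empty_right _
      have hmem : pseudoMonomial {i, j} ∅ ∈ neuralIdeal C := by
        apply mem_of_crit hd
        rintro v hv ⟨h1, -⟩
        have hiv : i ∈ v := h1 (Finset.mem_insert_self _ _)
        have hjv : j ∈ v := h1 (by simp)
        have := (mem_codeInterval.mp (mem_interval_of_mem hp hv hiv)).2 hjv
        rcases Finset.mem_insert.mp this with h | h
        · exact hji h
        · exact hjτ h
      have hpol := polarize_mem' hd hmem
      have heq : polarize ({i, j} : Finset (Fin n)) ∅ = X (Sum.inl j) * X (Sum.inl i) := by
        rw [polarize, Finset.prod_empty,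
          show ({i, j} : Finset (Fin n)) = insert i {j} from rfl,
          Finset.prod_insert (Finset.notMem_singleton.mpr (Ne.symm hji)),
          Finset.prod_singleton]
        ring
      rwa [← heq]
    · rw [SetLike.mem_coe, Ideal.mem_colon_span_singleton]
      have hij : i ≠ j := fun h => hp.2.1 (h ▸ hp.1 hjσ)
      have hd : Disjoint ({i} : Finset (Fin n)) ({j} : Finset (Fin n)) := by
        simp [Finset.disjoint_left, hij]
      have hmem : pseudoMonomial {i} {j} ∈ neuralIdeal C := by
        apply mem_of_crit hd
        rintro v hv ⟨h1, h2⟩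
        have hiv : i ∈ v := h1 (Finset.mem_singleton_self _)
        have hjv : j ∈ v := (mem_codeInterval.mp (mem_interval_of_mem hp hv hiv)).1
          (Finset.mem_insert_of_mem hjσ)
        exact Finset.disjoint_left.mp h2 hjv (Finset.mem_singleton_self _)
      have hpol := polarize_mem' hd hmem
      have heq : polarize ({i} : Finset (Fin n)) {j} = X (Sum.inr j) * X (Sum.inl i) := by
        rw [polarize, Finset.prod_singleton, Finset.prod_singleton]
        ring
      rwa [← heq]

end Aux5
/-- With neuron `i` a `k`-piercing of `C∖i`: `(J_n : x_i) = p_i`,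
`J_n + (x_i) = J_{n-1} + (x_i)`, and the sequence
`0 → S/p_i →^{·x_i} S/J_n → S/(J_{n-1} + (x_i)) → 0` is exact. -/
theorem piercing_short_exact_sequence {n : ℕ}
    (C : Finset (Finset (Fin n))) (hC : ∅ ∈ C) (i : Fin n)
    (σ τ : Finset (Fin n)) (k : ℕ)
    (hp : IsPiercingWith C i σ τ) (hk : τ.card = σ.card + k) :
    (polarizedNeuralIdeal C).colon (Ideal.span {(X (Sum.inl i) : PolyS n)}) =
      piercingIdeal i σ τ ∧
    polarizedNeuralIdeal C + Ideal.span {(X (Sum.inl i) : PolyS n)} =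
      polarizedNeuralIdeal (deleteNeuron C i) +
        Ideal.span {(X (Sum.inl i) : PolyS n)} ∧
    ∃ (f : (PolyS n ⧸ piercingIdeal i σ τ) →ₗ[PolyS n]
            (PolyS n ⧸ polarizedNeuralIdeal C))
      (g : (PolyS n ⧸ polarizedNeuralIdeal C) →ₗ[PolyS n]
            (PolyS n ⧸ (polarizedNeuralIdeal (deleteNeuron C i) +
              Ideal.span {(X (Sum.inl i) : PolyS n)}))),
      (∀ s : PolyS n,
        f (Ideal.Quotient.mk (piercingIdeal i σ τ) s) =
          Ideal.Quotient.mk (polarizedNeuralIdeal C) (X (Sum.inl i) * s)) ∧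
      (∀ s : PolyS n,
        g (Ideal.Quotient.mk (polarizedNeuralIdeal C) s) =
          Ideal.Quotient.mk (polarizedNeuralIdeal (deleteNeuron C i) +
            Ideal.span {(X (Sum.inl i) : PolyS n)}) s) ∧
      Function.Injective f ∧ Function.Surjective g ∧ Function.Exact f g := by
  classical
  set x : PolyS n := X (Sum.inl i) with hxdef
  have hA := colon_eq hp
  have hBsup := sum_eq hp
  have hB : polarizedNeuralIdeal C + Ideal.span {x} =
      polarizedNeuralIdeal (deleteNeuron C i) + Ideal.span {x} := by
    rw [Submodule.add_eq_sup, Submodule.add_eq_sup]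
    exact hBsup
  refine ⟨hA, hB, ?_⟩
  set J := polarizedNeuralIdeal C with hJdef
  set p := piercingIdeal i σ τ with hpdef
  set K := polarizedNeuralIdeal (deleteNeuron C i) + Ideal.span {x} with hKdef
  have hJK : J ≤ K := by
    rw [← hB, Submodule.add_eq_sup]
    exact le_sup_left
  have hxK : Ideal.span {x} ≤ K := by
    rw [← hB, Submodule.add_eq_sup]
    exact le_sup_right
  let mulX : PolyS n →ₗ[PolyS n] PolyS n :=
    { toFun := fun s => x * s
      map_add' := fun s t => mul_add x s t
      map_smul' := fun c s => by simp only [smul_eq_mul, RingHom.id_apply]; ring }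
  have hcomap : p ≤ Submodule.comap mulX (J : Submodule (PolyS n) (PolyS n)) := by
    intro s hs
    have hs' : s ∈ J.colon (Ideal.span {x}) := hA ▸ hs
    have : s * x ∈ J := Ideal.mem_colon_span_singleton.mp hs'
    show x * s ∈ J
    rwa [mul_comm]
  refine ⟨Submodule.mapQ p J mulX hcomap, Submodule.mapQ J K LinearMap.id hJK,
    ?_, ?_, ?_, ?_, ?_⟩
  · intro s
    exact Submodule.mapQ_apply p J mulX s
  · intro s
    exact Submodule.mapQ_apply J K LinearMap.id s
  · rw [← LinearMap.ker_eq_bot, LinearMap.ker_eq_bot']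
    intro y hy
    obtain ⟨s, rfl⟩ := Submodule.Quotient.mk_surjective p y
    rw [Submodule.mapQ_apply, Submodule.Quotient.mk_eq_zero] at hy
    rw [Submodule.Quotient.mk_eq_zero]
    have : s * x ∈ J := by
      show s * x ∈ J
      have : x * s ∈ J := hy
      rwa [mul_comm] at this
    have : s ∈ J.colon (Ideal.span {x}) := Ideal.mem_colon_span_singleton.mpr this
    rwa [hA] at this
  · intro y
    obtain ⟨s, rfl⟩ := Submodule.Quotient.mk_surjective K y
    exact ⟨Submodule.Quotient.mk s, Submodule.mapQ_apply J K LinearMap.id s⟩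
  · intro y
    obtain ⟨s, rfl⟩ := Submodule.Quotient.mk_surjective J y
    rw [Submodule.mapQ_apply, Submodule.Quotient.mk_eq_zero]
    constructor
    · intro hs
      have hs' : s ∈ J ⊔ Ideal.span {x} := by
        rw [← Submodule.add_eq_sup, hB]
        exact hs
      obtain ⟨u, hu, t, ht, rfl⟩ := Submodule.mem_sup.mp hs'
      obtain ⟨c, rfl⟩ := Ideal.mem_span_singleton'.mp ht
      refine ⟨Submodule.Quotient.mk c, ?_⟩
      rw [Submodule.mapQ_apply, Submodule.Quotient.eq]
      have heq : mulX c - (u + c * x) = -u := by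
        show x * c - (u + c * x) = -u
        ring
      rw [heq]
      exact neg_mem hu
    · rintro ⟨z, hz⟩
      obtain ⟨c, rfl⟩ := Submodule.Quotient.mk_surjective p z
      rw [Submodule.mapQ_apply] at hz
      have h1 : mulX c - s ∈ J := (Submodule.Quotient.eq J).mp hz
      have h2 : x * c ∈ Ideal.span {x} := Ideal.mem_span_singleton'.mpr ⟨c, mul_comm c x⟩
      have heq : s = x * c - (x * c - s) := by ring
      rw [heq]
      exact Submodule.sub_mem _ (hxK h2) (hJK h1)
end

section
/- Let G be a finite chordal graph. Then for every k, the number of vertices of simplicial degree k removed is the same in every simplicial elimination ordering of G. That is, if v_n, …, v_1 and w_n, …, w_1 are two simplicial elimination orderings of G, then for each k the number of indices i such that v_i has degree k in the subgraph induced by {v_1, …, v_i} equals the number of indices i such that w_i has degree k in the subgraph induced by {w_1, …, w_i}. -/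
/-- A finite simple graph is chordal if every cycle of length at least 4 has a chord:
an edge of the graph between two vertices of the cycle that is not an edge of the
cycle. -/
def SimpleGraph.IsChordalGraph {V : Type*} (G : SimpleGraph V) : Prop :=
  ∀ (v : V) (c : G.Walk v v), c.IsCycle → 4 ≤ c.length →
    ∃ a b : V, a ∈ c.support ∧ b ∈ c.support ∧ G.Adj a b ∧ s(a, b) ∉ c.edges

/-- `e 0, e 1, …, e (n-1)` is (the reverse of) a simplicial elimination ordering:
each vertex `e i` is simplicial in the subgraph induced by `{e 0, …, e i}`, i.e. its
neighbors among the earlier vertices form a clique. -/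
def IsSimplicialElimOrdering {V : Type*} {n : ℕ} (G : SimpleGraph V)
    (e : Fin n ≃ V) : Prop :=
  ∀ i j k : Fin n, j < i → k < i → j ≠ k →
    G.Adj (e i) (e j) → G.Adj (e i) (e k) → G.Adj (e j) (e k)

/-- The simplicial degree of `e i`: the number of its neighbors among the vertices
remaining at the time of its removal, i.e. among `{e 0, …, e (i-1)}`. -/
def simplicialDegree {V : Type*} {n : ℕ} (G : SimpleGraph V) [DecidableRel G.Adj]
    (e : Fin n ≃ V) (i : Fin n) : ℕ :=
  (Finset.univ.filter (fun j : Fin n => j < i ∧ G.Adj (e i) (e j))).card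

section Aux

variable {V : Type*} [Fintype V] [DecidableEq V] {n : ℕ} (G : SimpleGraph V)
  [DecidableRel G.Adj]

/-- The neighbors of `e i` among `{e 0, …, e (i-1)}`. -/
def belowNbrs (e : Fin n ≃ V) (i : Fin n) : Finset (Fin n) :=
  Finset.univ.filter (fun j : Fin n => j < i ∧ G.Adj (e i) (e j))

lemma simplicialDegree_eq (e : Fin n ≃ V) (i : Fin n) :
    simplicialDegree G e i = (belowNbrs G e i).card := rfl

lemma simplicialDegree_lt (e : Fin n ≃ V) (i : Fin n) :
    simplicialDegree G e i < n := by
  calc simplicialDegree G e i ≤ (Finset.Iio i).card := by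
        apply Finset.card_le_card
        intro j hj
        simp only [simplicialDegree, Finset.mem_filter] at hj
        simp [hj.2.1]
    _ = i.val := by simp
    _ < n := i.isLt

/-- The number of cliques of `G` with `k + 1` vertices. -/
noncomputable def cliqueCount (k : ℕ) : ℕ :=
  Nat.card {s : Finset V // s.card = k + 1 ∧ G.IsClique (s : Set V)}

/-- The key identity: for any simplicial elimination ordering, the sum of
`(simplicial degree).choose k` over all vertices counts the `(k+1)`-cliques,
via the bijection sending `(i, S)` (with `S` a `k`-subset of the below-neighbors
of `e i`) to the clique `{e i} ∪ e '' S`. -/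
lemma sum_choose_eq (e : Fin n ≃ V) (he : IsSimplicialElimOrdering G e) (k : ℕ) :
    ∑ i : Fin n, (simplicialDegree G e i).choose k = cliqueCount G k := by
  classical
  have hcard : ∑ i : Fin n, (simplicialDegree G e i).choose k =
      ((Finset.univ : Finset (Fin n)).sigma
        (fun i => (belowNbrs G e i).powersetCard k)).card := by
    rw [Finset.card_sigma]
    refine Finset.sum_congr rfl fun i _ => ?_
    rw [Finset.card_powersetCard, simplicialDegree_eq]
  rw [hcard, cliqueCount, Nat.card_eq_fintype_card, Fintype.card_subtype]
  refine Finset.card_bij (fun p _ => insert (e p.1) (p.2.image e)) ?_ ?_ ?_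
  · rintro ⟨i, S⟩ hp
    rw [Finset.mem_sigma, Finset.mem_powersetCard] at hp
    obtain ⟨-, hS, hScard⟩ := hp
    have hmem : ∀ j ∈ S, j < i ∧ G.Adj (e i) (e j) := by
      intro j hj
      have := hS hj; simpa [belowNbrs] using this
    have hnotmem : e i ∉ S.image e := by
      intro h
      obtain ⟨j, hj, hje⟩ := Finset.mem_image.1 h
      exact absurd (e.injective hje) (ne_of_lt (hmem j hj).1)
    refine Finset.mem_filter.2 ⟨Finset.mem_univ _, ?_, ?_⟩
    · rw [Finset.card_insert_of_notMem hnotmem,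
        Finset.card_image_of_injective _ e.injective, hScard]
    · intro a ha b hb hab
      simp only [Finset.coe_insert, Set.mem_insert_iff, Finset.mem_coe,
        Finset.mem_image] at ha hb
      rcases ha with rfl | ⟨j, hj, rfl⟩
      · rcases hb with rfl | ⟨j', hj', rfl⟩
        · exact absurd rfl hab
        · exact (hmem j' hj').2
      · rcases hb with rfl | ⟨j', hj', rfl⟩
        · exact (hmem j hj).2.symm
        · exact he i j j' (hmem j hj).1 (hmem j' hj').1
            (fun h => hab (by rw [h])) (hmem j hj).2 (hmem j' hj').2
  · rintro ⟨i, S⟩ hp ⟨i', S'⟩ hp' heq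
    rw [Finset.mem_sigma, Finset.mem_powersetCard] at hp hp'
    have hlt : ∀ j ∈ S, j < i := fun j hj => by
      have := hp.2.1 hj; exact (Finset.mem_filter.1 this).2.1
    have hlt' : ∀ j ∈ S', j < i' := fun j hj => by
      have := hp'.2.1 hj; exact (Finset.mem_filter.1 this).2.1
    simp only at heq
    have hii : i = i' := by
      by_contra hne
      have h1 : e i ∈ insert (e i') (S'.image e) := heq ▸ Finset.mem_insert_self _ _
      have h2 : e i' ∈ insert (e i) (S.image e) := heq ▸ Finset.mem_insert_self _ _
      rcases Finset.mem_insert.1 h1 with h | h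
      · exact hne (e.injective h)
      · obtain ⟨j, hj, hje⟩ := Finset.mem_image.1 h
        have hii' : i < i' := e.injective hje ▸ hlt' _ hj
        rcases Finset.mem_insert.1 h2 with h' | h'
        · exact hne (e.injective h').symm
        · obtain ⟨j', hj', hje'⟩ := Finset.mem_image.1 h'
          have : i' < i := e.injective hje' ▸ hlt _ hj'
          exact absurd hii' (not_lt_of_gt this)
    subst hii
    have hnm : e i ∉ S.image e := by
      intro h
      obtain ⟨j, hj, hje⟩ := Finset.mem_image.1 h
      exact absurd (e.injective hje) (ne_of_lt (hlt j hj))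
    have hnm' : e i ∉ S'.image e := by
      intro h
      obtain ⟨j, hj, hje⟩ := Finset.mem_image.1 h
      exact absurd (e.injective hje) (ne_of_lt (hlt' j hj))
    have himg : S.image e = S'.image e := by
      rw [← Finset.erase_insert hnm, ← Finset.erase_insert hnm', heq]
    have : S = S' := Finset.image_injective e.injective himg
    simp [this]
  · intro s hs
    rw [Finset.mem_filter] at hs
    obtain ⟨-, hcard, hclq⟩ := hs
    have hne : (s.image (fun v => e.symm v)).Nonempty := by
      rw [Finset.image_nonempty, ← Finset.card_pos, hcard]; omega
    set i := (s.image (fun v => e.symm v)).max' hne with hi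
    have hei : e i ∈ s := by
      have := (s.image (fun v => e.symm v)).max'_mem hne
      rw [← hi, Finset.mem_image] at this
      obtain ⟨v, hv, hvi⟩ := this
      rwa [← hvi, Equiv.apply_symm_apply]
    refine ⟨⟨i, (s.erase (e i)).image (fun v => e.symm v)⟩, ?_, ?_⟩
    · rw [Finset.mem_sigma, Finset.mem_powersetCard]
      refine ⟨Finset.mem_univ _, ?_, ?_⟩
      · intro j hj
        rw [Finset.mem_image] at hj
        obtain ⟨v, hv, rfl⟩ := hj
        rw [Finset.mem_erase] at hv
        simp only [belowNbrs, Finset.mem_filter, Finset.mem_univ, true_and]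
        constructor
        · have hle : e.symm v ≤ i :=
            Finset.le_max' _ _ (Finset.mem_image_of_mem _ hv.2)
          have hne' : e.symm v ≠ i := fun h => hv.1 (by rw [← h, Equiv.apply_symm_apply])
          exact lt_of_le_of_ne hle hne'
        · rw [Equiv.apply_symm_apply]
          exact hclq hei hv.2 (Ne.symm hv.1)
      · rw [Finset.card_image_of_injective _ e.symm.injective,
          Finset.card_erase_of_mem hei, hcard]; rfl
    · simp only
      rw [Finset.image_image]
      have hid : ((fun v => e (e.symm v)) : V → V) = id := by ext v; simp
      have : ((⇑e) ∘ fun v => e.symm v : V → V) = id := by ext v; simp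
      rw [this, Finset.image_id]
      exact Finset.insert_erase hei

/-- Grouping by simplicial degree: the count identity. -/
lemma sum_choose_grouped (e : Fin n ≃ V) (k : ℕ) :
    ∑ i : Fin n, (simplicialDegree G e i).choose k =
      ∑ m ∈ Finset.range n,
        (Finset.univ.filter (fun i : Fin n => simplicialDegree G e i = m)).card
          * m.choose k := by
  rw [← Finset.sum_fiberwise_of_maps_to
    (fun i _ => Finset.mem_range.2 (simplicialDegree_lt G e i))
    (fun i => (simplicialDegree G e i).choose k)]
  refine Finset.sum_congr rfl fun m _ => ?_
  rw [Finset.sum_congr rfl (fun i hi => by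
    rw [(Finset.mem_filter.1 hi).2]), Finset.sum_const, smul_eq_mul]

end Aux

/-- In a finite chordal graph, the number of vertices removed with
simplicial degree `k` is the same in every simplicial elimination ordering. -/
theorem chordal_simplicial_degree_counts_fixed {V : Type*} [Fintype V]
    [DecidableEq V] {n : ℕ} (G : SimpleGraph V) [DecidableRel G.Adj]
    (hG : G.IsChordalGraph) (e e' : Fin n ≃ V)
    (he : IsSimplicialElimOrdering G e) (he' : IsSimplicialElimOrdering G e') :
    ∀ k : ℕ,
      (Finset.univ.filter (fun i : Fin n => simplicialDegree G e i = k)).card =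
        (Finset.univ.filter (fun i : Fin n => simplicialDegree G e' i = k)).card := by
  set N := fun (f : Fin n ≃ V) (m : ℕ) =>
    (Finset.univ.filter (fun i : Fin n => simplicialDegree G f i = m)).card with hN
  have hNzero : ∀ (f : Fin n ≃ V) m, n ≤ m → N f m = 0 := by
    intro f m hm
    rw [hN]
    simp only [Finset.card_eq_zero, Finset.filter_eq_empty_iff]
    intro i _
    exact fun h => absurd (h ▸ simplicialDegree_lt G f i) (not_lt_of_ge hm)
  -- downward strong induction
  suffices h : ∀ j m, n ≤ m + j → N e m = N e' m by
    intro k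
    exact h n k (Nat.le_add_left n k)
  intro j
  induction j with
  | zero => intro m hm; rw [hNzero e m (by omega), hNzero e' m (by omega)]
  | succ j ih =>
    intro m hm
    by_cases hcase : n ≤ m + j
    · exact ih m hcase
    -- m + j < n and n ≤ m + j + 1, so m = n - j - 1; in particular m < n
    · have hmn : m < n := by omega
      have key : ∀ f : Fin n ≃ V, IsSimplicialElimOrdering G f →
          cliqueCount G m = N f m +
            ∑ m' ∈ Finset.Ico (m + 1) n, N f m' * m'.choose m := by
        intro f hf
        rw [← sum_choose_eq G f hf m, sum_choose_grouped G f m]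
        have hsplit : Finset.range n = Finset.Ico 0 n := by
          rw [Finset.range_eq_Ico]
        rw [hsplit, ← Finset.sum_Ico_consecutive _ (Nat.zero_le m) (le_of_lt hmn)]
        have h1 : ∑ m' ∈ Finset.Ico 0 m, N f m' * m'.choose m = 0 := by
          apply Finset.sum_eq_zero
          intro m' hm'
          rw [Nat.choose_eq_zero_of_lt (Finset.mem_Ico.1 hm').2, mul_zero]
        rw [h1, zero_add, ← Finset.sum_Ico_consecutive _ (Nat.le_succ m) hmn,
          Finset.sum_Ico_succ_top (le_refl m)]
        simp [Nat.choose_self]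
        rfl
      have htail : ∑ m' ∈ Finset.Ico (m + 1) n, N e m' * m'.choose m =
          ∑ m' ∈ Finset.Ico (m + 1) n, N e' m' * m'.choose m := by
        refine Finset.sum_congr rfl fun m' hm' => ?_
        have : n ≤ m' + j := by
          have := (Finset.mem_Ico.1 hm').1; omega
        rw [ih m' this]
      have h1 := key e he
      have h2 := key e' he'
      omega
end
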